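/- (Example 5.9(2), failure of the annulus to be a spectral domain.) For every real r with 0 < r < 2^{1/3} − 1 there exists a 2×2 complex matrix T, diagonalizable with two distinct eigenvalues z, w lying in the annulus A(r) := {ζ ∈ ℂ : r < |ζ| < 1}, satisfying ‖T‖ ≤ 1 and ‖r·T^{−1}‖ ≤ 1, such that A(r) is not a spectral domain for T: there exists a bounded holomorphic function f : A(r) → ℂ with ‖f(T)‖ > sup_{ζ ∈ A(r)} |f(ζ)|, where f(T) is the 2×2 matrix acting on the eigenvectors v_1, v_2 of T by f(T)v_1 = f(z)v_1, f(T)v_2 = f(w)v_2. -/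

import Mathlib

open scoped Matrix.Norms.L2Operator ComplexOrder
open Matrix

noncomputable section

/-- The positive semidefinite square root of a positive semidefinite matrix, as
`Matrix.PosSemidef.sqrt` was defined in the older Mathlib (removed since). -/
def posSemidefSqrt {n' : Type*} [Fintype n'] [DecidableEq n'] {M : Matrix n' n' ℂ}
    (hM : M.PosSemidef) : Matrix n' n' ℂ :=
  hM.1.eigenvectorUnitary.1 * diagonal ((↑) ∘ (Real.sqrt) ∘ hM.1.eigenvalues) *
  (star hM.1.eigenvectorUnitary : Matrix n' n' ℂ)

open scoped Classical in
/-- Square root of a positive semidefinite matrix (junk value `0` otherwise). -/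
def msqrt {n' : Type*} [Fintype n'] [DecidableEq n'] (M : Matrix n' n' ℂ) : Matrix n' n' ℂ :=
  if h : M.PosSemidef then posSemidefSqrt h else 0

/-- The pseudo-distance `d_Δ`. -/
def dDelta {α m' n' : Type*} [Fintype m'] [Fintype n'] [DecidableEq m'] [DecidableEq n']
    (Δ : α → Matrix m' n' ℂ) (z w : α) : ℝ :=
  ‖(msqrt (1 - Δ w * (Δ w)ᴴ))⁻¹ * ((Δ z - Δ w) *
      ((1 - (Δ w)ᴴ * Δ z)⁻¹ * msqrt (1 - (Δ w)ᴴ * Δ w)))‖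

/-- `B_Δ = {z ∈ E : ‖Δ(z)‖ < 1}`. -/
def BDelta {α m' n' : Type*} [Fintype m'] [Fintype n'] [DecidableEq n'] (E : Set α)
    (Δ : α → Matrix m' n' ℂ) : Set α :=
  {z | z ∈ E ∧ ‖Δ z‖ < 1}

/-- pseudo-hyperbolic distance on the unit disk -/
def dDisk (a b : ℂ) : ℝ := ‖a - b‖ / ‖1 - (starRingEnd ℂ) b * a‖

/-- elementary tensor `ξ ⊗ v` in `ℂ^m ⊗ ℂ^2`, realized as a function on `m × Fin 2` -/
def tpr {m' : Type*} (ξ : m' → ℂ) (v : Fin 2 → ℂ) : m' × Fin 2 → ℂ :=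
  fun p => ξ p.1 * v p.2

/-- inner product, conjugate-linear in the second variable -/
def herm {m' : Type*} [Fintype m'] (ξ η : m' → ℂ) : ℂ :=
  ∑ p, ξ p * (starRingEnd ℂ) (η p)

/-- positive semidefiniteness of a `2 × 2` kernel `(a i j)` -/
def PSD2 (a : Fin 2 → Fin 2 → ℂ) : Prop :=
  ∀ c : Fin 2 → ℂ, 0 ≤ ∑ i, ∑ j, a i j * c i * (starRingEnd ℂ) (c j)

/-- `T` is a generic tuple with joint eigenvectors `v` and joint eigenvalues `z 0 ≠ z 1`. -/
def IsGenericTuple {d : ℕ} (T : Fin d → Matrix (Fin 2) (Fin 2) ℂ)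
    (v : Fin 2 → Fin 2 → ℂ) (z : Fin 2 → Fin d → ℂ) : Prop :=
  LinearIndependent ℂ v ∧ z 0 ≠ z 1 ∧ ∀ i j, T i *ᵥ v j = z j i • v j

/-- `‖Δ(T)‖ ≤ 1`, where `Δ(T)` is the matrix on `ℂ^s ⊗ ℂ^2` determined by
`Δ(T)(e_i ⊗ v_j) = (Δ(z_j) e_i) ⊗ v_j`. -/
def DeltaTContract {β : Type*} {s r : ℕ} (Δ : β → Matrix (Fin s) (Fin r) ℂ)
    (v : Fin 2 → Fin 2 → ℂ) (z : Fin 2 → β) : Prop :=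
  ∀ DT : Matrix (Fin s × Fin 2) (Fin r × Fin 2) ℂ,
    (∀ (i : Fin r) (j : Fin 2),
      DT *ᵥ tpr (Pi.single i 1) (v j) = tpr (Δ (z j) *ᵥ Pi.single i 1) (v j)) →
    ‖DT‖ ≤ 1

/-- membership in the class `S_{2,gen}(B_Δ)` -/
def MemS2gen {d s r : ℕ} (E : Set (Fin d → ℂ)) (Δ : (Fin d → ℂ) → Matrix (Fin s) (Fin r) ℂ)
    (f : (Fin d → ℂ) → ℂ) : Prop :=
  ∀ (T : Fin d → Matrix (Fin 2) (Fin 2) ℂ) (v : Fin 2 → Fin 2 → ℂ) (z : Fin 2 → Fin d → ℂ),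
    IsGenericTuple T v z → (∀ j, z j ∈ BDelta E Δ) → DeltaTContract Δ v z →
    ∀ fT : Matrix (Fin 2) (Fin 2) ℂ, (∀ j, fT *ᵥ v j = f (z j) • v j) → ‖fT‖ ≤ 1

/-- the Möbius pseudo-distance of a domain `Ω` -/
def dMobius {α : Type*} [NormedAddCommGroup α] [NormedSpace ℂ α] (Ω : Set α) (z w : α) : ℝ :=
  sSup {x | ∃ g : α → ℂ, DifferentiableOn ℂ g Ω ∧ (∀ ζ ∈ Ω, ‖g ζ‖ < 1) ∧ x = dDisk (g z) (g w)}

/-- `Ω` is a complete spectral domain for the diagonalizable tuple with eigenvectors `v` and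
joint eigenvalues `z 0, z 1`. -/
def IsCompleteSpectralDomainFor {α : Type*} [NormedAddCommGroup α] [NormedSpace ℂ α]
    (Ω : Set α) (v : Fin 2 → Fin 2 → ℂ) (z : Fin 2 → α) : Prop :=
  ∀ (n : ℕ) (F : α → Matrix (Fin n) (Fin n) ℂ),
    (∀ i j, DifferentiableOn ℂ (fun ζ => F ζ i j) Ω) →
    ∀ C : ℝ, (∀ ζ ∈ Ω, ‖F ζ‖ ≤ C) →
    ∀ FT : Matrix (Fin n × Fin 2) (Fin n × Fin 2) ℂ,
      (∀ (ξ : Fin n → ℂ) (j : Fin 2), FT *ᵥ tpr ξ (v j) = tpr (F (z j) *ᵥ ξ) (v j)) →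
      ‖FT‖ ≤ C

set_option maxHeartbeats 1600000 in
/-- **Example 5.9(2)**: failure of the annulus to be a spectral domain: for
`0 < r < 2^{1/3} − 1` there is a diagonalizable `T` with eigenvalues in `A(r)`, `‖T‖ ≤ 1` and
`‖r T⁻¹‖ ≤ 1` for which `A(r)` is not a spectral domain. -/
theorem annulus_not_spectral_domain (r : ℝ) (hr0 : 0 < r)
    (hr1 : r < (2 : ℝ) ^ ((1 : ℝ) / 3) - 1) :
    ∃ (T : Matrix (Fin 2) (Fin 2) ℂ) (v : Fin 2 → Fin 2 → ℂ) (z w : ℂ),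
      LinearIndependent ℂ v ∧ z ≠ w ∧
      (r < ‖z‖ ∧ ‖z‖ < 1) ∧ (r < ‖w‖ ∧ ‖w‖ < 1) ∧
      T *ᵥ v 0 = z • v 0 ∧ T *ᵥ v 1 = w • v 1 ∧
      ‖T‖ ≤ 1 ∧ ‖(r : ℂ) • T⁻¹‖ ≤ 1 ∧
      ∃ f : ℂ → ℂ, DifferentiableOn ℂ f {ζ : ℂ | r < ‖ζ‖ ∧ ‖ζ‖ < 1} ∧
        (∃ Cb : ℝ, ∀ ζ : ℂ, r < ‖ζ‖ → ‖ζ‖ < 1 → ‖f ζ‖ ≤ Cb) ∧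
        ∀ fT : Matrix (Fin 2) (Fin 2) ℂ,
          fT *ᵥ v 0 = f z • v 0 → fT *ᵥ v 1 = f w • v 1 →
          sSup {x | ∃ ζ : ℂ, (r < ‖ζ‖ ∧ ‖ζ‖ < 1) ∧ x = ‖f ζ‖} < ‖fT‖ := by
  -- arithmetic preliminaries
  have hr3 : r < 1/3 := by
    have h1 : ((2:ℝ) ^ ((1:ℝ)/3)) ^ (3:ℕ) = 2 := by
      rw [← Real.rpow_natCast ((2:ℝ) ^ ((1:ℝ)/3)) 3, ← Real.rpow_mul (by norm_num)]
      norm_num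
    have h0 : (0:ℝ) < (2:ℝ) ^ ((1:ℝ)/3) := Real.rpow_pos_of_pos (by norm_num) _
    nlinarith [h1, h0, sq_nonneg ((2:ℝ) ^ ((1:ℝ)/3) - 4/3)]
  have hr1' : r < 1 := by linarith
  set s : ℝ := Real.sqrt r with hsdef
  have hs2 : s * s = r := Real.mul_self_sqrt hr0.le
  have hs0 : 0 < s := Real.sqrt_pos.mpr hr0
  have hs1 : s < 1 := by nlinarith [sq_nonneg (s - 1)]
  have hrs : r < s := by nlinarith
  have hsc0 : (s:ℂ) ≠ 0 := Complex.ofReal_ne_zero.mpr hs0.ne'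
  have hrc0 : (r:ℂ) ≠ 0 := Complex.ofReal_ne_zero.mpr hr0.ne'
  have hs2c : (s:ℂ) * (s:ℂ) = (r:ℂ) := by rw [← Complex.ofReal_mul, hs2]
  have hdiv : (r:ℂ) / (s:ℂ) = (s:ℂ) := by
    rw [← hs2c]; field_simp
  set T : Matrix (Fin 2) (Fin 2) ℂ := ![![(s:ℂ), ((1-r:ℝ):ℂ)], ![0, -(s:ℂ)]] with hT
  set v : Fin 2 → Fin 2 → ℂ := ![![1, 0], ![((1-r:ℝ):ℂ), -2*(s:ℂ)]] with hv
  -- ‖T‖ ≤ 1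
  have hTnorm : ‖T‖ ≤ 1 := by
    rw [Matrix.l2_opNorm_def]
    refine ContinuousLinearMap.opNorm_le_bound _ zero_le_one fun y => ?_
    rw [one_mul]
    have hgoal : ‖(EuclideanSpace.equiv (Fin 2) ℂ).symm (T *ᵥ y)‖ ≤ ‖y‖ := by
      rw [EuclideanSpace.norm_eq, EuclideanSpace.norm_eq]
      have e0 : (T *ᵥ (y : Fin 2 → ℂ)) 0 = (s:ℂ) * y 0 + ((1-r:ℝ):ℂ) * y 1 := by
        simp [hT, Matrix.mulVec, dotProduct, Fin.sum_univ_two]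
      have e1 : (T *ᵥ (y : Fin 2 → ℂ)) 1 = -(s:ℂ) * y 1 := by
        simp [hT, Matrix.mulVec, dotProduct, Fin.sum_univ_two]
      have hcoord : ∀ i, ((EuclideanSpace.equiv (Fin 2) ℂ).symm (T *ᵥ y)) i
          = (T *ᵥ (y : Fin 2 → ℂ)) i := fun i => rfl
      rw [Fin.sum_univ_two, Fin.sum_univ_two, hcoord, hcoord, e0, e1]
      apply Real.sqrt_le_sqrt
      have hb : ‖(s:ℂ) * y 0 + ((1-r:ℝ):ℂ) * y 1‖ ≤ s * ‖y 0‖ + (1-r) * ‖y 1‖ := by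
        calc ‖(s:ℂ) * y 0 + ((1-r:ℝ):ℂ) * y 1‖
            ≤ ‖(s:ℂ) * y 0‖ + ‖((1-r:ℝ):ℂ) * y 1‖ := norm_add_le _ _
          _ = s * ‖y 0‖ + (1-r) * ‖y 1‖ := by
              rw [norm_mul, norm_mul, Complex.norm_real, Complex.norm_real,
                Real.norm_eq_abs, Real.norm_eq_abs, abs_of_pos hs0,
                abs_of_nonneg (by linarith : (0:ℝ) ≤ 1 - r)]
      have hb1 : ‖-(s:ℂ) * y 1‖ = s * ‖y 1‖ := by
        rw [norm_mul, norm_neg, Complex.norm_real, Real.norm_eq_abs, abs_of_pos hs0]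
      have hp : (0:ℝ) ≤ ‖y 0‖ := norm_nonneg _
      have hq : (0:ℝ) ≤ ‖y 1‖ := norm_nonneg _
      have hb0 : (0:ℝ) ≤ ‖(s:ℂ) * y 0 + ((1-r:ℝ):ℂ) * y 1‖ := norm_nonneg _
      rw [hb1]
      have hbsq := mul_self_le_mul_self hb0 hb
      have hkey : (s*‖y 0‖+(1-s*s)*‖y 1‖)^2 + (s*‖y 1‖)^2 ≤ ‖y 0‖^2+‖y 1‖^2 := by
        nlinarith [mul_nonneg (by nlinarith : (0:ℝ) ≤ 1 - s*s)
          (sq_nonneg (‖y 0‖ - s*‖y 1‖))]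
      rw [hs2] at hkey
      nlinarith [hbsq, hkey]
    simpa [Matrix.toEuclideanLin_apply] using hgoal
  -- T * T = r • 1 and r • T⁻¹ = T
  have hTT : T * T = (r:ℂ) • (1 : Matrix (Fin 2) (Fin 2) ℂ) := by
    ext i j
    rw [Matrix.mul_apply]
    fin_cases i <;> fin_cases j <;>
      simp [hT, Matrix.mul_apply, Fin.sum_univ_two, Matrix.one_apply,
        Matrix.smul_apply] <;>
      first
        | ring1
        | linear_combination hs2c
        | linear_combination -hs2c
  have hinv : (r:ℂ) • T⁻¹ = T := by
    have h1 : T⁻¹ = (r:ℂ)⁻¹ • T := by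
      apply Matrix.inv_eq_right_inv
      rw [Matrix.mul_smul, hTT, smul_smul, inv_mul_cancel₀ hrc0, one_smul]
    rw [h1, smul_smul, mul_inv_cancel₀ hrc0, one_smul]
  refine ⟨T, v, (s:ℂ), -(s:ℂ), ?_, ?_, ?_, ?_, ?_, ?_, hTnorm, ?_, ?_⟩
  · -- linear independence
    rw [hv]
    refine linearIndependent_fin2.mpr ⟨?_, ?_⟩
    · intro h
      have h1 := congrFun h 1
      simp [hsc0] at h1
    · intro a h
      have h1' := congrFun h 1
      have h0' := congrFun h 0
      simp [hsc0] at h1' h0'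
      rw [h1'] at h0'
      simp at h0' 
  · -- z ≠ w
    intro h
    have hz : (s:ℂ) = 0 := by linear_combination h / 2
    exact hs0.ne' (Complex.ofReal_eq_zero.mp hz)
  · constructor <;> rw [Complex.norm_real, Real.norm_eq_abs, abs_of_pos hs0] <;> assumption
  · constructor <;> rw [norm_neg, Complex.norm_real, Real.norm_eq_abs, abs_of_pos hs0] <;>
      assumption
  · funext i
    fin_cases i <;>
      simp [hT, hv, Matrix.mulVec, dotProduct, Fin.sum_univ_two]
  · funext i
    fin_cases i <;>
      simp [hT, hv, Matrix.mulVec, dotProduct, Fin.sum_univ_two] <;> ring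
  · rw [hinv]; exact hTnorm
  · -- the function f
    refine ⟨fun ζ => ζ + (r:ℂ)/ζ, ?_, ⟨2, ?_⟩, ?_⟩
    · intro ζ hζ
      have hζ0 : ζ ≠ 0 := by
        intro h
        rw [h] at hζ
        simp at hζ
        linarith
      exact (differentiableAt_id.add
        ((differentiableAt_const _).div differentiableAt_id hζ0)).differentiableWithinAt
    · intro ζ h1 h2
      have hζ0 : (0:ℝ) < ‖ζ‖ := lt_trans hr0 h1
      have : r / ‖ζ‖ ≤ 1 := by
        rw [div_le_one hζ0]; linarith
      calc ‖ζ + (r:ℂ)/ζ‖ ≤ ‖ζ‖ + ‖(r:ℂ)/ζ‖ := norm_add_le _ _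
        _ = ‖ζ‖ + r / ‖ζ‖ := by
            rw [norm_div, Complex.norm_real, Real.norm_eq_abs, abs_of_pos hr0]
        _ ≤ 2 := by linarith
    · intro fT h0 h1
      -- compute the values of f at the eigenvalues
      have hfz : (s:ℂ) + (r:ℂ)/(s:ℂ) = 2*(s:ℂ) := by rw [hdiv]; ring
      have hfw : -(s:ℂ) + (r:ℂ)/(-(s:ℂ)) = -(2*(s:ℂ)) := by
        rw [div_neg, hdiv]; ring
      -- extract matrix entries
      have ha := congrFun h0 0
      have hb := congrFun h1 0
      simp [hv, Matrix.mulVec, dotProduct, Fin.sum_univ_two] at ha hb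
      -- ha : fT 0 0 = s + r/s ; hb : fT 0 0 * (1-r) + fT 0 1 * (-2s) = (-s + r/(-s))*(1-r)
      have h01 : fT 0 1 = 2*((1-r:ℝ):ℂ) := by
        rw [hdiv] at ha
        rw [div_neg, hdiv, ha] at hb
        have key : fT 0 1 * (2*(s:ℂ)) = (2*((1-r:ℝ):ℂ)) * (2*(s:ℂ)) := by
          push_cast at hb ⊢
          linear_combination -hb
        exact mul_right_cancel₀ (by simp [hsc0] : (2*(s:ℂ)) ≠ 0) key
      -- lower bound on ‖fT‖
      have hlow : 2*(1-r) ≤ ‖fT‖ := by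
        set x : EuclideanSpace ℂ (Fin 2) := (EuclideanSpace.equiv (Fin 2) ℂ).symm ![0, 1]
          with hx
        have hxnorm : ‖x‖ = 1 := by
          rw [hx, EuclideanSpace.norm_eq, Fin.sum_univ_two]
          norm_num
        have hmv := Matrix.l2_opNorm_mulVec fT x
        rw [hxnorm, mul_one] at hmv
        have hcoord : ((EuclideanSpace.equiv (Fin 2) ℂ).symm (fT *ᵥ x)) 0
            = (fT *ᵥ (x : Fin 2 → ℂ)) 0 := rfl
        have hval : (fT *ᵥ (x : Fin 2 → ℂ)) 0 = fT 0 1 := by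
          simp [hx, Matrix.mulVec, dotProduct, Fin.sum_univ_two]
        have hge : 2*(1-r) ≤ ‖(EuclideanSpace.equiv (Fin 2) ℂ).symm (fT *ᵥ x)‖ := by
          rw [EuclideanSpace.norm_eq, Fin.sum_univ_two, hcoord, hval, h01]
          have : ‖2*((1-r:ℝ):ℂ)‖ = 2*(1-r) := by
            rw [norm_mul, Complex.norm_real, Real.norm_eq_abs,
              abs_of_nonneg (by linarith : (0:ℝ) ≤ 1-r)]
            norm_num
          rw [← this]
          have h2 : (0:ℝ) ≤ ‖2*((1-r:ℝ):ℂ)‖ := norm_nonneg _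
          have h3 : (0:ℝ) ≤ ‖((EuclideanSpace.equiv (Fin 2) ℂ).symm (fT *ᵥ x)) 1‖^2 :=
            sq_nonneg _
          calc ‖2*((1-r:ℝ):ℂ)‖ = Real.sqrt (‖2*((1-r:ℝ):ℂ)‖^2) := by
                rw [Real.sqrt_sq h2]
            _ ≤ _ := Real.sqrt_le_sqrt (by nlinarith)
        linarith
      -- upper bound on the sup
      have hsup : sSup {x | ∃ ζ : ℂ, (r < ‖ζ‖ ∧ ‖ζ‖ < 1) ∧ x = ‖ζ + (r:ℂ)/ζ‖} ≤ 1 + r := by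
        apply Real.sSup_le
        · rintro x ⟨ζ, ⟨hζ1, hζ2⟩, rfl⟩
          have hζ0 : (0:ℝ) < ‖ζ‖ := lt_trans hr0 hζ1
          have hdv : r / ‖ζ‖ ≤ 1 + r - ‖ζ‖ := by
            rw [div_le_iff₀ hζ0]
            nlinarith
          calc ‖ζ + (r:ℂ)/ζ‖ ≤ ‖ζ‖ + ‖(r:ℂ)/ζ‖ := norm_add_le _ _
            _ = ‖ζ‖ + r / ‖ζ‖ := by
                rw [norm_div, Complex.norm_real, Real.norm_eq_abs, abs_of_pos hr0]
            _ ≤ 1 + r := by linarith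
        · linarith
      calc sSup {x | ∃ ζ : ℂ, (r < ‖ζ‖ ∧ ‖ζ‖ < 1) ∧ x = ‖ζ + (r:ℂ)/ζ‖} ≤ 1 + r := hsup
        _ < 2*(1-r) := by linarith
        _ ≤ ‖fT‖ := hlow
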